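/- Let $L_1,\dots,L_{n+1} : \mathbb{C} \to P^n(\mathbb{C})$ be holomorphic curves with reduced representations, and suppose there is $\delta > 0$ such that for all $\zeta \in \mathbb{C}$, $\frac{|\det(L_1(\zeta),\dots,L_{n+1}(\zeta))|}{\|L_1(\zeta)\| \cdots \|L_{n+1}(\zeta)\|} \geq \delta^n$ (in particular the determinant is nowhere vanishing). Then $\sum_{i=1}^{n+1} T_{L_i}(r) = O(1)$, i.e. each $L_i$ is constant. -/

import Mathlib

open Matrix Finset

lemma diff_det {m : ℕ} (A : ℂ → Matrix (Fin m) (Fin m) ℂ)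
    (h : ∀ i j, Differentiable ℂ fun ζ => A ζ i j) :
    Differentiable ℂ fun ζ => (A ζ).det := by
  simp only [Matrix.det_apply']
  refine Differentiable.fun_sum fun σ _ => Differentiable.const_mul ?_ _
  exact Differentiable.fun_finset_prod fun i _ => h (σ i) i

lemma abs_det_le {m : ℕ} (A : Matrix (Fin m) (Fin m) ℂ) (b : Fin m → ℝ)
    (hb : ∀ k, 0 ≤ b k) (h : ∀ k j, ‖A k j‖ ≤ b k) :
    ‖A.det‖ ≤ (m.factorial : ℝ) * ∏ k, b k := by
  rw [Matrix.det_apply']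
  calc ‖∑ σ : Equiv.Perm (Fin m), Equiv.Perm.sign σ * ∏ i, A (σ i) i‖
      ≤ ∑ σ : Equiv.Perm (Fin m), ‖Equiv.Perm.sign σ * ∏ i, A (σ i) i‖ := by
        exact norm_sum_le _ _ -- maybe wrong name for Complex.abs
    _ ≤ ∑ σ : Equiv.Perm (Fin m), ∏ k, b k := by
        refine Finset.sum_le_sum fun σ _ => ?_
        rw [norm_mul, norm_prod]
        have hs : ‖((Equiv.Perm.sign σ : ℤ) : ℂ)‖ = 1 := by
          rcases Int.units_eq_one_or (Equiv.Perm.sign σ) with hh | hh <;> simp [hh]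
        rw [hs, one_mul]
        calc ∏ i, ‖A (σ i) i‖ ≤ ∏ i, b (σ i) :=
              Finset.prod_le_prod (fun i _ => norm_nonneg _) (fun i _ => h (σ i) i)
          _ = ∏ k, b k := Equiv.prod_comp σ b
    _ = (m.factorial : ℝ) * ∏ k, b k := by
        rw [Finset.sum_const, Finset.card_univ, Fintype.card_perm, nsmul_eq_mul, Fintype.card_fin]

set_option maxHeartbeats 1000000 in
/-- Key step in Lemma 3.4: if `L 1, …, L (n+1) : ℂ → Pⁿ(ℂ)` are holomorphic curves
given by (reduced) nowhere-vanishing holomorphic representations and there is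
`δ > 0` with `|det (L 1 ζ, …, L (n+1) ζ)| ≥ δⁿ ∏ ‖L i ζ‖` for all `ζ` (in
particular the determinant is nowhere vanishing), then each `L i` is constant as a
curve in projective space. -/
theorem stmt12 (n : ℕ) (L : Fin (n + 1) → ℂ → Fin (n + 1) → ℂ)
    (hdiff : ∀ i j, Differentiable ℂ (fun ζ => L i ζ j))
    (hred : ∀ i ζ, L i ζ ≠ 0)
    (δ : ℝ) (hδ : 0 < δ)
    (hdet : ∀ ζ : ℂ,
      ‖Matrix.det (Matrix.of fun i j => L i ζ j)‖
        ≥ δ ^ n * ∏ i, Real.sqrt (∑ j, (‖L i ζ j‖) ^ 2)) :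
    ∀ i, ∀ ζ₁ ζ₂ : ℂ, ∃ lam : ℂ, lam ≠ 0 ∧ L i ζ₁ = lam • L i ζ₂ := by
  intro i ζ₁ ζ₂
  set M : ℂ → Matrix (Fin (n + 1)) (Fin (n + 1)) ℂ :=
    fun ζ => Matrix.of fun a b => L a ζ b with hM
  set N : Fin (n + 1) → ℂ → ℝ :=
    fun k ζ => Real.sqrt (∑ j, (‖L k ζ j‖) ^ 2) with hN
  -- positivity of norms
  have hNpos : ∀ k ζ, 0 < N k ζ := by
    intro k ζ
    have hne : ∃ j, L k ζ j ≠ 0 := Function.ne_iff.mp (hred k ζ)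
    obtain ⟨j, hj⟩ := hne
    apply Real.sqrt_pos.mpr
    apply Finset.sum_pos' (fun j _ => sq_nonneg _)
    exact ⟨j, Finset.mem_univ j, pow_pos (norm_pos_iff.mpr hj) 2⟩
  have hPpos : ∀ ζ, 0 < ∏ k, N k ζ :=
    fun ζ => Finset.prod_pos fun k _ => hNpos k ζ
  have hentry : ∀ k ζ j, ‖L k ζ j‖ ≤ N k ζ := by
    intro k ζ j
    rw [hN]
    rw [show ‖L k ζ j‖ = Real.sqrt ((‖L k ζ j‖) ^ 2) by
      rw [Real.sqrt_sq (norm_nonneg _)]]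
    exact Real.sqrt_le_sqrt (Finset.single_le_sum
      (f := fun j => ‖L k ζ j‖ ^ 2) (fun j _ => sq_nonneg _) (Finset.mem_univ j))
  have hdpos : ∀ ζ, 0 < ‖(M ζ).det‖ := by
    intro ζ
    calc (0:ℝ) < δ ^ n * ∏ k, N k ζ := mul_pos (pow_pos hδ n) (hPpos ζ)
      _ ≤ ‖(M ζ).det‖ := hdet ζ
  have hd : ∀ ζ, (M ζ).det ≠ 0 := fun ζ => by
    intro h0; simpa [h0] using hdpos ζ
  -- the bounded holomorphic functions
  set v : Fin (n + 1) → ℂ → ℂ := fun m ζ => (M ζ).adjugate m i / (M ζ).det with hv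
  set h : Fin (n + 1) → Fin (n + 1) → ℂ → ℂ :=
    fun j m ζ => L i ζ j * v m ζ with hh
  have hMdiff : Differentiable ℂ fun ζ => (M ζ).det :=
    diff_det M fun a b => hdiff a b
  have hadjdiff : ∀ m, Differentiable ℂ fun ζ => (M ζ).adjugate m i := by
    intro m
    have : (fun ζ => (M ζ).adjugate m i)
        = fun ζ => ((M ζ).updateRow i (Pi.single m 1)).det := by
      funext ζ; rw [Matrix.adjugate_apply]
    rw [this]
    apply diff_det
    intro a b
    by_cases hai : a = i
    · simp only [Matrix.updateRow_apply, if_pos hai]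
      exact differentiable_const _
    · simp only [Matrix.updateRow_apply, if_neg hai]
      exact hdiff a b
  have hhdiff : ∀ j m, Differentiable ℂ (h j m) := by
    intro j m
    exact (hdiff i j).mul ((hadjdiff m).div hMdiff hd)
  -- the bound
  set F : ℝ := ((n + 1).factorial : ℝ) with hF
  have hbound : ∀ j m ζ, ‖h j m ζ‖ ≤ F / δ ^ n := by
    intro j m ζ
    have hadjle : ‖(M ζ).adjugate m i‖
        ≤ F * ∏ k ∈ Finset.univ.erase i, N k ζ := by
      rw [Matrix.adjugate_apply]
      have := abs_det_le ((M ζ).updateRow i (Pi.single m 1))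
        (fun k => if k = i then 1 else N k ζ)
        (fun k => by split <;> [norm_num; exact (hNpos _ ζ).le])
        (by
          intro k j'
          by_cases hki : k = i
          · subst hki
            simp only [Matrix.updateRow_apply, if_pos rfl, if_pos rfl]
            by_cases hj' : j' = m <;> simp [Pi.single_apply, hj']
          · simp only [Matrix.updateRow_apply, if_neg hki]
            exact hentry k ζ j')
      refine this.trans (le_of_eq ?_)
      congr 1
      rw [← Finset.mul_prod_erase Finset.univ _ (Finset.mem_univ i), if_pos rfl, one_mul]
      exact Finset.prod_congr rfl fun k hk => if_neg (Finset.ne_of_mem_erase hk)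
    have hprod : N i ζ * ∏ k ∈ Finset.univ.erase i, N k ζ = ∏ k, N k ζ :=
      Finset.mul_prod_erase Finset.univ (fun k => N k ζ) (Finset.mem_univ i)
    have habs : ‖h j m ζ‖
        = ‖L i ζ j‖ * ‖(M ζ).adjugate m i‖
          / ‖(M ζ).det‖ := by
      simp only [hh, hv, norm_mul, norm_div, mul_div_assoc]
    rw [habs]
    have hFpos : (0:ℝ) < F := by rw [hF]; positivity
    have hnum : ‖L i ζ j‖ * ‖(M ζ).adjugate m i‖
        ≤ F * ∏ k, N k ζ := by
      calc ‖L i ζ j‖ * ‖(M ζ).adjugate m i‖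
          ≤ N i ζ * (F * ∏ k ∈ Finset.univ.erase i, N k ζ) := by
            apply mul_le_mul (hentry i ζ j) hadjle (norm_nonneg _) (hNpos i ζ).le
        _ = F * ∏ k, N k ζ := by rw [← hprod]; ring
    calc ‖L i ζ j‖ * ‖(M ζ).adjugate m i‖
          / ‖(M ζ).det‖
        ≤ (F * ∏ k, N k ζ) / (δ ^ n * ∏ k, N k ζ) := by
          exact div_le_div₀ (le_of_lt (mul_pos hFpos (hPpos ζ))) hnum
            (mul_pos (pow_pos hδ n) (hPpos ζ)) (hdet ζ)
      _ = F / δ ^ n := by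
          rw [mul_comm F _, mul_comm (δ ^ n) _, mul_div_mul_left _ _ (hPpos ζ).ne']
  -- Liouville
  have hconst : ∀ j m (w w' : ℂ), h j m w = h j m w' := by
    intro j m w w'
    apply (hhdiff j m).apply_eq_apply_of_bounded
    rw [isBounded_iff_forall_norm_le]
    refine ⟨F / δ ^ n, ?_⟩
    rintro x ⟨ζ, rfl⟩
    simpa using hbound j m ζ
  -- the sum identity
  have hsum : ∀ ζ, ∑ m, h m m ζ = 1 := by
    intro ζ
    have h1 : ∑ m, L i ζ m * (M ζ).adjugate m i = (M ζ).det := by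
      have h2 : (M ζ * (M ζ).adjugate) i i = (M ζ).det := by
        rw [Matrix.mul_adjugate]
        simp [Matrix.smul_apply, Matrix.one_apply_eq]
      rw [Matrix.mul_apply] at h2
      exact h2
    simp only [hh, hv]
    calc ∑ m, L i ζ m * ((M ζ).adjugate m i / (M ζ).det)
        = (∑ m, L i ζ m * (M ζ).adjugate m i) / (M ζ).det := by
          rw [Finset.sum_div]
          exact Finset.sum_congr rfl fun m _ => (mul_div_assoc _ _ _).symm
      _ = 1 := by rw [h1, div_self (hd ζ)]
  -- pick a nonvanishing coordinate at ζ₂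
  have hex : ∃ m₀, h m₀ m₀ ζ₂ ≠ 0 := by
    by_contra hc
    push_neg at hc
    have h0 := hsum ζ₂
    rw [Finset.sum_eq_zero (fun m _ => hc m)] at h0
    exact one_ne_zero h0.symm
  obtain ⟨m₀, hm₀⟩ := hex
  have h2ne : v m₀ ζ₂ ≠ 0 := by
    intro h0
    apply hm₀
    simp only [hh, h0, mul_zero]
  have h1ne : v m₀ ζ₁ ≠ 0 := by
    intro h0
    apply hm₀
    rw [hconst m₀ m₀ ζ₂ ζ₁]
    simp only [hh, h0, mul_zero]
  refine ⟨v m₀ ζ₂ / v m₀ ζ₁, div_ne_zero h2ne h1ne, ?_⟩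
  funext j
  have hkey := hconst j m₀ ζ₁ ζ₂
  simp only [hh] at hkey
  show L i ζ₁ j = (v m₀ ζ₂ / v m₀ ζ₁) * L i ζ₂ j
  field_simp
  linear_combination hkey
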